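/- The map Φ : (1,∞) × (0,1/2) → ℝ², Φ(s,α) := (s^{−4α}, α s^{−4α−2}), is a continuous bijection onto the open set D := {(y₁,y₂) ∈ ℝ² : 0 < y₁ < 1 and 0 < y₂ < y₁²/2}, and its inverse Φ^{−1} : D → (1,∞) × (0,1/2) is continuous. -/

import Mathlib

/-- The parameter map `Φ(s,α) = (s^{−4α}, α s^{−4α−2})`. -/
noncomputable def Phi (p : ℝ × ℝ) : ℝ × ℝ :=
  (p.1 ^ (-(4 : ℝ) * p.2), p.2 * p.1 ^ (-(4 : ℝ) * p.2 - 2))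

/-- The feasible region `D = {(y₁,y₂) : 0 < y₁ < 1, 0 < y₂ < y₁²/2}`. -/
def Dfeas : Set (ℝ × ℝ) := {y | 0 < y.1 ∧ y.1 < 1 ∧ 0 < y.2 ∧ y.2 < y.1 ^ 2 / 2}

/-- The parameter space `(1,∞) × (0,1/2)`. -/
def Sparam : Set (ℝ × ℝ) := Set.Ioi (1 : ℝ) ×ˢ Set.Ioo (0 : ℝ) (1 / 2)

open Real Set

/-- Auxiliary strictly monotone surjection extending `t ↦ t log t` beyond `[1,∞)`. -/
noncomputable def Fmap (t : ℝ) : ℝ := if 1 ≤ t then t * Real.log t else t - 1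

lemma Fmap_mono : StrictMono Fmap := by
  intro a b hab
  unfold Fmap
  split_ifs with h1 h2 h2
  · have ha0 : 0 < a := lt_of_lt_of_le zero_lt_one h1
    calc a * Real.log a ≤ b * Real.log a :=
          mul_le_mul_of_nonneg_right hab.le (Real.log_nonneg h1)
      _ < b * Real.log b :=
          mul_lt_mul_of_pos_left (Real.log_lt_log ha0 hab) (by linarith)
  · exact absurd (h1.trans hab.le) h2
  · have hb0 : (0:ℝ) ≤ Real.log b := Real.log_nonneg h2
    nlinarith
  · linarith

lemma contMulLog : Continuous fun t : ℝ => t * Real.log t := by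
  have h := Real.continuous_negMulLog.neg
  convert h using 1
  funext x
  simp [Real.negMulLog]

lemma Fmap_cont : Continuous Fmap := by
  unfold Fmap
  apply Continuous.if_le contMulLog (by continuity) continuous_const continuous_id
  intro x hx
  subst hx
  simp

lemma Fmap_surj : Function.Surjective Fmap := by
  intro c
  by_cases hc : 0 ≤ c
  · set T : ℝ := max 2 (2 * c) with hT
    have hT2 : (2:ℝ) ≤ T := le_max_left _ _
    have hTc : 2 * c ≤ T := le_max_right _ _
    have h1T : (1:ℝ) ≤ T := by linarith
    have hlog2 : (1/2 : ℝ) ≤ Real.log 2 := by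
      have := Real.log_two_gt_d9; linarith
    have hcT : c ≤ T * Real.log T := by
      have h1 : 2 * c * Real.log 2 ≤ T * Real.log T := by
        apply mul_le_mul hTc (Real.log_le_log (by norm_num) hT2) (by positivity) (by linarith)
      nlinarith
    have hcont : ContinuousOn (fun t : ℝ => t * Real.log t) (Set.Icc 1 T) :=
      contMulLog.continuousOn
    have hmem : c ∈ Set.Icc ((fun t : ℝ => t * Real.log t) 1) ((fun t : ℝ => t * Real.log t) T) := by
      simp only [Real.log_one, mul_zero]
      exact ⟨hc, hcT⟩
    obtain ⟨t, ht, htc⟩ := intermediate_value_Icc h1T hcont hmem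
    exact ⟨t, by rw [Fmap, if_pos ht.1]; exact htc⟩
  · exact ⟨c + 1, by rw [Fmap, if_neg (by linarith)]; ring⟩

/-- The order isomorphism induced by `Fmap`. -/
noncomputable def eIso : ℝ ≃o ℝ := StrictMono.orderIsoOfSurjective Fmap Fmap_mono Fmap_surj

/-- Continuous inverse of `Fmap`. -/
noncomputable def hInv (c : ℝ) : ℝ := eIso.symm c

lemma hInv_cont : Continuous hInv := (OrderIso.toHomeomorph eIso.symm).continuous

lemma Fmap_hInv (c : ℝ) : Fmap (hInv c) = c := by
  have := StrictMono.orderIsoOfSurjective_self_symm_apply Fmap Fmap_mono Fmap_surj c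
  simpa [hInv, eIso] using this

lemma hInv_Fmap (t : ℝ) : hInv (Fmap t) = t := by
  have := StrictMono.orderIsoOfSurjective_symm_apply_self Fmap Fmap_mono Fmap_surj t
  simpa [hInv, eIso] using this

lemma hInv_gt_one {c : ℝ} (hc : 0 < c) : 1 < hInv c := by
  have h0 : Fmap 1 = 0 := by simp [Fmap]
  have : Fmap 1 < Fmap (hInv c) := by rw [Fmap_hInv, h0]; exact hc
  exact Fmap_mono.lt_iff_lt.mp this

lemma hInv_eq {c : ℝ} (hc : 0 < c) : hInv c * Real.log (hInv c) = c := by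
  have h1 := hInv_gt_one hc
  have := Fmap_hInv c
  rwa [Fmap, if_pos h1.le] at this

lemma hInv_lt {c u : ℝ} (hc : 0 < c) (hu : 1 < u) (h : c < u * Real.log u) : hInv c < u := by
  apply Fmap_mono.lt_iff_lt.mp
  rw [Fmap_hInv, Fmap, if_pos hu.le]
  exact h

/-- The inverse map. -/
noncomputable def Ginv (y : ℝ × ℝ) : ℝ × ℝ :=
  (Real.sqrt (hInv (-(y.1 * Real.log y.1) / (2 * y.2))),
    y.2 / y.1 * hInv (-(y.1 * Real.log y.1) / (2 * y.2)))

theorem Phi_homeomorphism :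
    IsOpen Dfeas ∧
    ContinuousOn Phi Sparam ∧
    Set.BijOn Phi Sparam Dfeas ∧
    ∃ g : ℝ × ℝ → ℝ × ℝ, ContinuousOn g Dfeas ∧
      (∀ p ∈ Sparam, g (Phi p) = p) ∧ (∀ y ∈ Dfeas, Phi (g y) = y) := by
  -- openness of D
  have hopen : IsOpen Dfeas := by
    have heq : Dfeas = ({y : ℝ × ℝ | 0 < y.1} ∩ {y | y.1 < 1}) ∩
        ({y : ℝ × ℝ | 0 < y.2} ∩ {y | y.2 < y.1 ^ 2 / 2}) := by
      ext y; simp [Dfeas]; tauto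
    rw [heq]
    exact ((isOpen_lt continuous_const continuous_fst).inter
        (isOpen_lt continuous_fst continuous_const)).inter
      ((isOpen_lt continuous_const continuous_snd).inter
        (isOpen_lt continuous_snd ((continuous_fst.pow 2).div_const 2)))
  -- continuity of Phi
  have hPhiCont : ContinuousOn Phi Sparam := by
    have hne : ∀ p ∈ Sparam, (Prod.fst p ≠ 0 ∨ 0 < -(4:ℝ) * p.2) := by
      intro p hp
      rcases hp with ⟨hp1, -⟩
      exact Or.inl (by simp only [Set.mem_Ioi] at hp1; positivity)
    have hne2 : ∀ p ∈ Sparam, (Prod.fst p ≠ 0 ∨ 0 < -(4:ℝ) * p.2 - 2) := by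
      intro p hp
      rcases hp with ⟨hp1, -⟩
      exact Or.inl (by simp only [Set.mem_Ioi] at hp1; positivity)
    exact ContinuousOn.prodMk
      (ContinuousOn.rpow continuousOn_fst (continuous_const.mul continuous_snd).continuousOn hne)
      (ContinuousOn.mul continuousOn_snd
        (ContinuousOn.rpow continuousOn_fst
          ((continuous_const.mul continuous_snd).sub continuous_const).continuousOn hne2))
  -- key algebraic facts
  have memS : ∀ p : ℝ × ℝ, p ∈ Sparam ↔ 1 < p.1 ∧ 0 < p.2 ∧ p.2 < 1/2 := by
    intro p; simp [Sparam, Set.mem_prod, and_assoc]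
  have memD : ∀ y : ℝ × ℝ, y ∈ Dfeas ↔ 0 < y.1 ∧ y.1 < 1 ∧ 0 < y.2 ∧ y.2 < y.1 ^ 2 / 2 := by
    intro y; rfl
  -- maps to
  have hmaps : ∀ p ∈ Sparam, Phi p ∈ Dfeas := by
    rintro ⟨s, α⟩ hp
    obtain ⟨hs, hα0, hα2⟩ := (memS _).mp hp
    have s0 : (0:ℝ) < s := by linarith
    refine (memD _).mpr ⟨Real.rpow_pos_of_pos s0 _, ?_, ?_, ?_⟩
    · exact Real.rpow_lt_one_of_one_lt_of_neg hs (by simp; nlinarith)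
    · exact mul_pos hα0 (Real.rpow_pos_of_pos s0 _)
    · have e2 : (s ^ (-(4:ℝ)*α)) ^ 2 = s ^ ((2:ℝ) - 4*α) * s ^ (-(4:ℝ)*α - 2) := by
        rw [sq, ← Real.rpow_add s0, ← Real.rpow_add s0]; ring_nf
      have h1 : (1:ℝ) < s ^ ((2:ℝ) - 4*α) :=
        (Real.one_lt_rpow_iff_of_pos s0).mpr (Or.inl ⟨hs, by linarith⟩)
      have hX : (0:ℝ) < s ^ (-(4:ℝ)*α - 2) := Real.rpow_pos_of_pos s0 _
      simp only [Phi]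
      nlinarith
  -- g ∘ Phi = id on Sparam
  have hleft : ∀ p ∈ Sparam, Ginv (Phi p) = p := by
    rintro ⟨s, α⟩ hp
    obtain ⟨hs, hα0, hα2⟩ := (memS _).mp hp
    have s0 : (0:ℝ) < s := by linarith
    have key : s ^ (-(4:ℝ)*α) = s ^ (-(4:ℝ)*α - 2) * s ^ 2 := by
      rw [← Real.rpow_natCast s 2, ← Real.rpow_add s0]; norm_num
    have hX : (0:ℝ) < s ^ (-(4:ℝ)*α - 2) := Real.rpow_pos_of_pos s0 _
    have hlog1 : Real.log (s ^ (-(4:ℝ)*α)) = (-(4:ℝ)*α) * Real.log s := Real.log_rpow s0 _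
    have hc : -((s ^ (-(4:ℝ)*α)) * Real.log (s ^ (-(4:ℝ)*α))) / (2 * (α * s ^ (-(4:ℝ)*α - 2)))
        = s ^ 2 * Real.log (s ^ 2) := by
      rw [hlog1, key, Real.log_pow]
      field_simp
      ring
    have hFs : Fmap (s ^ 2) = s ^ 2 * Real.log (s ^ 2) := by
      rw [Fmap, if_pos (by nlinarith : (1:ℝ) ≤ s ^ 2)]
    have hinv : hInv (s ^ 2 * Real.log (s ^ 2)) = s ^ 2 := by
      rw [← hFs]; exact hInv_Fmap _
    simp only [Phi, Ginv] at *
    rw [hc, hinv]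
    rw [Prod.mk.injEq]
    constructor
    · exact Real.sqrt_sq s0.le
    · rw [key]; field_simp
  -- Phi ∘ g = id on Dfeas and g maps into Sparam
  have hGmem : ∀ y ∈ Dfeas, Ginv y ∈ Sparam := by
    rintro ⟨y₁, y₂⟩ hy
    obtain ⟨hy1, hy1', hy2, hy2'⟩ := (memD _).mp hy
    have hL : Real.log y₁ < 0 := Real.log_neg hy1 hy1'
    set c : ℝ := -(y₁ * Real.log y₁) / (2 * y₂) with hcdef
    have hc : 0 < c := div_pos (by nlinarith) (by linarith)
    set t : ℝ := hInv c with htdef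
    have ht1 : 1 < t := hInv_gt_one hc
    have htc : t * Real.log t = c := hInv_eq hc
    have t0 : (0:ℝ) < t := by linarith
    set u : ℝ := y₁ / (2 * y₂) with hudef
    have hyu : y₁⁻¹ < u := by
      rw [hudef, lt_div_iff₀ (by positivity), inv_mul_eq_div, div_lt_iff₀ hy1]
      nlinarith
    have hu1 : 1 < u := lt_trans (by rw [lt_inv_comm₀ (by norm_num) hy1]; simpa using hy1') hyu
    have hloglt : -Real.log y₁ < Real.log u := by
      have := Real.log_lt_log (by positivity) hyu
      rwa [Real.log_inv] at this
    have hcu : c < u * Real.log u := by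
      have hceq : c = u * (-Real.log y₁) := by rw [hcdef, hudef]; ring
      rw [hceq]
      exact mul_lt_mul_of_pos_left hloglt (by linarith)
    have htu : t < u := hInv_lt hc hu1 hcu
    refine (memS _).mpr ⟨?_, ?_, ?_⟩
    · show 1 < Real.sqrt t
      rw [show (1:ℝ) = Real.sqrt 1 from Real.sqrt_one.symm]
      exact Real.sqrt_lt_sqrt (by norm_num) ht1
    · exact mul_pos (div_pos hy2 hy1) t0
    · show y₂ / y₁ * t < 1/2
      have hhalf : y₂ / y₁ * u = 1/2 := by rw [hudef]; field_simp
      calc y₂ / y₁ * t < y₂ / y₁ * u :=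
            mul_lt_mul_of_pos_left htu (div_pos hy2 hy1)
        _ = 1/2 := hhalf
  have hright : ∀ y ∈ Dfeas, Phi (Ginv y) = y := by
    rintro ⟨y₁, y₂⟩ hy
    obtain ⟨hy1, hy1', hy2, hy2'⟩ := (memD _).mp hy
    replace hy1 : 0 < y₁ := hy1
    replace hy1' : y₁ < 1 := hy1'
    replace hy2 : 0 < y₂ := hy2
    replace hy2' : y₂ < y₁ ^ 2 / 2 := hy2'
    set c : ℝ := -(y₁ * Real.log y₁) / (2 * y₂) with hcdef
    have hL : Real.log y₁ < 0 := Real.log_neg hy1 hy1'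
    have hc : 0 < c := div_pos (by nlinarith) (by linarith)
    set t : ℝ := hInv c with htdef
    have ht1 : 1 < t := hInv_gt_one hc
    have htc : t * Real.log t = c := hInv_eq hc
    have t0 : (0:ℝ) < t := by linarith
    have hlogt : Real.log t = c / t := by
      field_simp
      linarith [htc]
    set α' : ℝ := y₂ / y₁ * t with hadef
    have hs'0 : (0:ℝ) < Real.sqrt t := Real.sqrt_pos.mpr t0
    have hfirst : Real.sqrt t ^ (-(4:ℝ) * α') = y₁ := by
      rw [Real.sqrt_eq_rpow, ← Real.rpow_mul t0.le]
      rw [Real.rpow_def_of_pos t0]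
      rw [← Real.exp_log hy1]
      congr 1
      rw [hlogt, hadef, hcdef]
      field_simp
      ring
    have hs2 : Real.sqrt t ^ ((2:ℝ)) = t := by
      rw [show ((2:ℝ)) = ((2:ℕ):ℝ) by norm_num, Real.rpow_natCast]
      exact Real.sq_sqrt t0.le
    have hsecond : α' * Real.sqrt t ^ (-(4:ℝ) * α' - 2) = y₂ := by
      rw [show (-(4:ℝ) * α' - 2) = (-(4:ℝ) * α') + (-2) from by ring,
        Real.rpow_add hs'0, hfirst,
        show ((-2:ℝ)) = -((2:ℝ)) from by norm_num, Real.rpow_neg (Real.sqrt_nonneg t), hs2]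
      rw [hadef]
      field_simp
    simp only [Phi, Ginv]
    rw [show (-(y₁ * Real.log y₁) / (2 * y₂)) = c from rfl]
    rw [Prod.mk.injEq]
    exact ⟨hfirst, hsecond⟩
  -- continuity of Ginv on Dfeas
  have hGcont : ContinuousOn Ginv Dfeas := by
    have hccont : ContinuousOn (fun y : ℝ × ℝ => -(y.1 * Real.log y.1) / (2 * y.2)) Dfeas := by
      apply ContinuousOn.div
      · exact ((contMulLog.comp continuous_fst).neg).continuousOn
      · exact (continuous_const.mul continuous_snd : Continuous fun y : ℝ × ℝ => (2:ℝ) * y.2).continuousOn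
      · intro y hy
        obtain ⟨-, -, hy2, -⟩ := (memD _).mp hy
        positivity
    have htcont : ContinuousOn
        (fun y : ℝ × ℝ => hInv (-(y.1 * Real.log y.1) / (2 * y.2))) Dfeas :=
      hInv_cont.comp_continuousOn hccont
    apply ContinuousOn.prodMk
    · exact Real.continuous_sqrt.comp_continuousOn htcont
    · apply ContinuousOn.mul
      · apply ContinuousOn.div continuous_snd.continuousOn continuous_fst.continuousOn
        intro y hy
        obtain ⟨hy1, -, -, -⟩ := (memD _).mp hy
        exact ne_of_gt hy1
      · exact htcont
  refine ⟨hopen, hPhiCont, ⟨hmaps, ?_, ?_⟩, Ginv, hGcont, hleft, hright⟩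
  · intro a ha b hb hab
    rw [← hleft a ha, ← hleft b hb, hab]
  · intro y hy
    exact ⟨Ginv y, hGmem y hy, hright y hy⟩
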